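/- For every non-negative integer n, the sum over i from 0 to n of binom(2i, i) * binom(2(n-i), n-i) equals the number of pairs (H, X), where H is a lattice path from (0,0) to (2n,0) with steps (1,1) and (1,-1), and X is a lattice point of H lying on the horizontal axis. -/

import Mathlib

/-- An up-down lattice path, encoded as a `List Bool` with `true` = up step
`(1,1)` and `false` = down step `(1,-1)`. -/
abbrev UDPath := List Bool

/-- The path is balanced: equally many up and down steps. -/
def IsBalanced (w : UDPath) : Prop := w.count true = w.count false

/-- The lattice point reached after `t` steps lies on the horizontal axis. -/
def OnAxisAt (w : UDPath) (t : ℕ) : Prop :=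
  (w.take t).count true = (w.take t).count false

open Finset

lemma count_true_add_count_false (w : List Bool) :
    w.count true + w.count false = w.length := by
  induction w with
  | nil => simp
  | cons b l ih => cases b <;> simp [List.count_cons] <;> omega

lemma count_ofFn (n : ℕ) (f : Fin n → Bool) :
    (List.ofFn f).count true = (univ.filter (fun i => f i = true)).card := by
  induction n with
  | zero => simp
  | succ n ih =>
      rw [List.ofFn_succ, List.count_cons, ih (fun i => f i.succ),
        card_filter, card_filter, Fin.sum_univ_succ]
      cases h : f 0 <;> simp [h] <;> omega

/-- Lists of `Bool`s of length `L` with `k` `true`s, as an equiv with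
`k`-subsets of `Fin L`. -/
noncomputable def listEquiv (L k : ℕ) :
    {w : List Bool // w.length = L ∧ w.count true = k} ≃
      {s : Finset (Fin L) // s.card = k} where
  toFun := fun ⟨w, hl, hc⟩ =>
    ⟨univ.filter (fun i : Fin L => w.get (Fin.cast hl.symm i) = true), by
      subst hl
      rw [← hc]
      conv_rhs => rw [← List.ofFn_get w]
      rw [count_ofFn]
      simp⟩
  invFun := fun ⟨s, hs⟩ =>
    ⟨List.ofFn (fun i : Fin L => decide (i ∈ s)), by
      constructor
      · simp
      · rw [count_ofFn, ← hs]
        congr 1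
        ext i
        simp⟩
  left_inv := by
    rintro ⟨w, hl, hc⟩
    subst hl
    apply Subtype.ext
    simp only
    conv_rhs => rw [← List.ofFn_get w]
    congr 1
    ext i
    simp
  right_inv := by
    rintro ⟨s, hs⟩
    apply Subtype.ext
    simp only
    ext i
    simp [List.get_ofFn]

/-- Balanced paths of length `2*m`. -/
def BalPath (m : ℕ) := {w : UDPath // w.length = 2 * m ∧ IsBalanced w}

noncomputable def balPathEquiv (m : ℕ) :
    BalPath m ≃ {s : Finset (Fin (2 * m)) // s.card = m} :=
  ((Equiv.subtypeEquivRight (fun w => by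
      constructor
      · rintro ⟨hl, hb⟩
        refine ⟨hl, ?_⟩
        have := count_true_add_count_false w
        rw [hl] at this
        unfold IsBalanced at hb
        omega
      · rintro ⟨hl, hc⟩
        refine ⟨hl, ?_⟩
        have := count_true_add_count_false w
        rw [hl] at this
        unfold IsBalanced
        omega)).trans (listEquiv (2 * m) m))

lemma card_balPath (m : ℕ) : Nat.card (BalPath m) = Nat.choose (2 * m) m := by
  rw [Nat.card_congr (balPathEquiv m), Nat.card_eq_fintype_card,
    Fintype.card_finset_len, Fintype.card_fin]

lemma split_facts {n : ℕ} {w : UDPath} {t : ℕ} (hl : w.length = 2 * n)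
    (hb : IsBalanced w) (ht : t ≤ 2 * n) (ha : OnAxisAt w t) :
    t = 2 * (w.take t).count true ∧ (w.take t).count true ≤ n ∧
      (w.take t).length = 2 * (w.take t).count true ∧ IsBalanced (w.take t) ∧
      (w.drop t).length = 2 * (n - (w.take t).count true) ∧
      IsBalanced (w.drop t) := by
  unfold IsBalanced OnAxisAt at *
  have hlt : (w.take t).length = t := by rw [List.length_take, hl]; omega
  have hcc := count_true_add_count_false (w.take t)
  rw [hlt] at hcc
  have h1 : w.count true = (w.take t).count true + (w.drop t).count true := by
    conv_lhs => rw [← List.take_append_drop t w]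
    rw [List.count_append]
  have h2 : w.count false = (w.take t).count false + (w.drop t).count false := by
    conv_lhs => rw [← List.take_append_drop t w]
    rw [List.count_append]
  have h3 := count_true_add_count_false w
  have h4 : (w.drop t).length = 2 * n - t := by rw [List.length_drop, hl]
  refine ⟨by omega, by omega, by omega, ha, by omega, by omega⟩

/-- The marked-path type. -/
abbrev Marked (n : ℕ) := {q : UDPath × ℕ //
    q.1.length = 2 * n ∧ IsBalanced q.1 ∧ q.2 ≤ 2 * n ∧ OnAxisAt q.1 q.2}

abbrev SplitTy (n : ℕ) := Σ i : Fin (n + 1), BalPath i.1 × BalPath (n - i.1)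

def splitFun (n : ℕ) (q : Marked n) : SplitTy n :=
  ⟨⟨(q.1.1.take q.1.2).count true,
      Nat.lt_succ_of_le (split_facts q.2.1 q.2.2.1 q.2.2.2.1 q.2.2.2.2).2.1⟩,
    ⟨q.1.1.take q.1.2, (split_facts q.2.1 q.2.2.1 q.2.2.2.1 q.2.2.2.2).2.2.1,
      (split_facts q.2.1 q.2.2.1 q.2.2.2.1 q.2.2.2.2).2.2.2.1⟩,
    ⟨q.1.1.drop q.1.2, (split_facts q.2.1 q.2.2.1 q.2.2.2.1 q.2.2.2.2).2.2.2.2.1,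
      (split_facts q.2.1 q.2.2.1 q.2.2.2.1 q.2.2.2.2).2.2.2.2.2⟩⟩

def glueFun (n : ℕ) (p : SplitTy n) : Marked n :=
  ⟨⟨p.2.1.1 ++ p.2.2.1, 2 * p.1.1⟩, by
    obtain ⟨⟨i, hi⟩, ⟨u, hul, hub⟩, ⟨v, hvl, hvb⟩⟩ := p
    dsimp only at *
    refine ⟨?_, ?_, ?_, ?_⟩
    · rw [List.length_append, hul, hvl]; omega
    · unfold IsBalanced at hub hvb ⊢
      rw [List.count_append, List.count_append, hub, hvb]
    · omega
    · unfold OnAxisAt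
      rw [List.take_left' hul]
      exact hub⟩

lemma glue_split (n : ℕ) : Function.LeftInverse (glueFun n) (splitFun n) := by
  rintro ⟨⟨w, t⟩, hl, hb, ht, ha⟩
  have h := split_facts hl hb ht ha
  apply Subtype.ext
  exact Prod.ext (List.take_append_drop t w) h.1.symm

lemma glue_inj (n : ℕ) : Function.Injective (glueFun n) := by
  rintro ⟨⟨i, hi⟩, ⟨u, hul, hub⟩, ⟨v, hvl, hvb⟩⟩
    ⟨⟨i', hi'⟩, ⟨u', hul', hub'⟩, ⟨v', hvl', hvb'⟩⟩ h
  simp only [glueFun, Subtype.mk.injEq, Prod.mk.injEq] at h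
  obtain ⟨h1, h2⟩ := h
  obtain rfl : i = i' := by omega
  obtain ⟨rfl, rfl⟩ := List.append_inj h1 (hul.trans hul'.symm)
  rfl

/-- The main structural equivalence: a marked balanced path splits at the mark. -/
noncomputable def splitEquiv (n : ℕ) : Marked n ≃ SplitTy n :=
  ⟨splitFun n, glueFun n, glue_split n,
    (glue_split n).rightInverse_of_injective (glue_inj n)⟩

theorem convolution_eq_marked_on_axis (n : ℕ) :
    ∑ i ∈ Finset.range (n + 1),
        Nat.choose (2 * i) i * Nat.choose (2 * (n - i)) (n - i) =
    Nat.card {q : UDPath × ℕ //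
        q.1.length = 2 * n ∧ IsBalanced q.1 ∧ q.2 ≤ 2 * n ∧
          OnAxisAt q.1 q.2} := by
  rw [Nat.card_congr (splitEquiv n)]
  rw [Nat.card_congr (Equiv.sigmaCongrRight
    (fun i : Fin (n + 1) => Equiv.prodCongr (balPathEquiv i.1) (balPathEquiv (n - i.1))))]
  rw [Nat.card_eq_fintype_card, Fintype.card_sigma]
  rw [Finset.sum_range]
  refine Finset.sum_congr rfl fun i _ => ?_
  rw [Fintype.card_prod, Fintype.card_finset_len, Fintype.card_finset_len,
    Fintype.card_fin, Fintype.card_fin]
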